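/- Let X = ∏_{i=1}^d X_i be a finite product of nonempty finite sets. Suppose two families of components (c, h_m, h_{mn}) and (c', h'_m, h'_{mn}) (with h_{mm} = h'_{mm} = 0, h_{mn}(x_m,x_n) = h_{nm}(x_n,x_m)) both satisfy the normalization conditions Σ_{x_m} h_m(x_m) = 0 for all m and Σ_{x_m} h_{mn}(x_m, x_n) = 0 for all m ≠ n and every fixed x_n ∈ X_n (and likewise for the primed family), and suppose their HDMR sums coincide pointwise: c + Σ_m h_m(x_m) + (1/2) Σ_{m,n} h_{mn}(x_m,x_n) = c' + Σ_m h'_m(x_m) + (1/2) Σ_{m,n} h'_{mn}(x_m,x_n) for all x ∈ X. Then c = c', h_m = h'_m for all m, and h_{mn} = h'_{mn} for all m, n. -/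

import Mathlib

/-- Two families of second-order HDMR components (with zero diagonal,
symmetric second-order components) that both satisfy the zero-mean / zero-marginal
normalization conditions and whose HDMR sums coincide pointwise must be equal
component-wise. -/
theorem hdmr_components_unique
    (d : ℕ) (X : Fin d → Type) [∀ i, Fintype (X i)] [∀ i, Nonempty (X i)]
    (c c' : ℝ) (h1 h1' : ∀ m : Fin d, X m → ℝ)
    (h2 h2' : ∀ m n : Fin d, X m → X n → ℝ)
    (hdiag : ∀ (m : Fin d) (xm xm' : X m), h2 m m xm xm' = 0)
    (hdiag' : ∀ (m : Fin d) (xm xm' : X m), h2' m m xm xm' = 0)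
    (hsymm : ∀ (m n : Fin d) (xm : X m) (xn : X n), h2 m n xm xn = h2 n m xn xm)
    (hsymm' : ∀ (m n : Fin d) (xm : X m) (xn : X n), h2' m n xm xn = h2' n m xn xm)
    (hzero1 : ∀ m : Fin d, ∑ xm : X m, h1 m xm = 0)
    (hzero1' : ∀ m : Fin d, ∑ xm : X m, h1' m xm = 0)
    (hzero2 : ∀ (m n : Fin d), m ≠ n → ∀ xn : X n, ∑ xm : X m, h2 m n xm xn = 0)
    (hzero2' : ∀ (m n : Fin d), m ≠ n → ∀ xn : X n, ∑ xm : X m, h2' m n xm xn = 0)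
    (hsum : ∀ x : ∀ i, X i,
      c + ∑ m, h1 m (x m) + (1 / 2) * ∑ m, ∑ n, h2 m n (x m) (x n) =
      c' + ∑ m, h1' m (x m) + (1 / 2) * ∑ m, ∑ n, h2' m n (x m) (x n)) :
    c = c' ∧
    (∀ (m : Fin d) (xm : X m), h1 m xm = h1' m xm) ∧
    (∀ (m n : Fin d) (xm : X m) (xn : X n), h2 m n xm xn = h2' m n xm xn) := by
  classical
  set a : ℝ := c - c' with ha
  set g1 : ∀ m : Fin d, X m → ℝ := fun m x => h1 m x - h1' m x with hg1
  set g2 : ∀ m n : Fin d, X m → X n → ℝ := fun m n xm xn => h2 m n xm xn - h2' m n xm xn with hg2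
  have gdiag : ∀ (m : Fin d) (xm xm' : X m), g2 m m xm xm' = 0 := by
    intro m xm xm'; simp [hg2, hdiag, hdiag']
  have gsymm : ∀ (m n : Fin d) (xm : X m) (xn : X n), g2 m n xm xn = g2 n m xn xm := by
    intro m n xm xn; simp [hg2, hsymm m n, hsymm' m n]
  have gz1 : ∀ m : Fin d, ∑ xm : X m, g1 m xm = 0 := by
    intro m; simp [hg1, Finset.sum_sub_distrib, hzero1, hzero1']
  have gz2 : ∀ (m n : Fin d), m ≠ n → ∀ xn : X n, ∑ xm : X m, g2 m n xm xn = 0 := by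
    intro m n hmn xn; simp [hg2, Finset.sum_sub_distrib, hzero2 m n hmn, hzero2' m n hmn]
  have hD : ∀ x : ∀ i, X i,
      a + ∑ m, g1 m (x m) + (1 / 2) * ∑ m, ∑ n, g2 m n (x m) (x n) = 0 := by
    intro x
    have h := hsum x
    have e1 : ∑ m, g1 m (x m) = (∑ m, h1 m (x m)) - ∑ m, h1' m (x m) := by
      simp [hg1, Finset.sum_sub_distrib]
    have e2 : ∑ m, ∑ n, g2 m n (x m) (x n)
        = (∑ m, ∑ n, h2 m n (x m) (x n)) - ∑ m, ∑ n, h2' m n (x m) (x n) := by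
      simp [hg2, Finset.sum_sub_distrib]
    rw [e1, e2, ha]; ring_nf; linarith
  -- cardinality positivity
  have cardpos : ∀ m : Fin d, (0 : ℝ) < (Fintype.card (X m) : ℝ) := by
    intro m; exact_mod_cast Fintype.card_pos
  -- key lemma A
  have keyA : ∀ (x : ∀ i, X i) (m : Fin d),
      g1 m (x m) + ∑ n, g2 m n (x m) (x n) = 0 := by
    intro x m
    -- sum hD over updates of coordinate m
    have hsplit1 : ∀ t : X m,
        ∑ j, g1 j (Function.update x m t j)
          = g1 m t + ∑ j ∈ Finset.univ.erase m, g1 j (x j) := by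
      intro t
      rw [← Finset.add_sum_erase _ _ (Finset.mem_univ m)]
      congr 1
      · simp
      · exact Finset.sum_congr rfl fun j hj => by
          rw [Function.update_of_ne (Finset.mem_erase.1 hj).1]
    have hsplit2 : ∀ t : X m,
        ∑ j, ∑ n, g2 j n (Function.update x m t j) (Function.update x m t n)
          = (∑ n ∈ Finset.univ.erase m, g2 m n t (x n))
            + ((∑ j ∈ Finset.univ.erase m, g2 j m (x j) t)
              + ∑ j ∈ Finset.univ.erase m, ∑ n ∈ Finset.univ.erase m, g2 j n (x j) (x n)) := by
      intro t
      rw [← Finset.add_sum_erase _ _ (Finset.mem_univ m)]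
      congr 1
      · -- j = m row
        rw [← Finset.add_sum_erase _ _ (Finset.mem_univ m)]
        simp only [Function.update_self]
        rw [gdiag, zero_add]
        exact Finset.sum_congr rfl fun n hn => by
          rw [Function.update_of_ne (Finset.mem_erase.1 hn).1]
      · rw [← Finset.sum_add_distrib]
        refine Finset.sum_congr rfl fun j hj => ?_
        have hjm := (Finset.mem_erase.1 hj).1
        rw [← Finset.add_sum_erase _ _ (Finset.mem_univ m)]
        rw [Function.update_of_ne hjm, Function.update_self]
        congr 1
        exact Finset.sum_congr rfl fun n hn => by
          rw [Function.update_of_ne (Finset.mem_erase.1 hn).1]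
    have hsum0 : ∑ t : X m, (a + ∑ j, g1 j (Function.update x m t j)
        + (1 / 2) * ∑ j, ∑ n, g2 j n (Function.update x m t j) (Function.update x m t n)) = 0 := by
      simp only [hD]
      simp
    have hrow : ∑ t : X m, ∑ n ∈ Finset.univ.erase m, g2 m n t (x n) = 0 := by
      rw [Finset.sum_comm]
      refine Finset.sum_eq_zero fun n hn => ?_
      exact gz2 m n (Finset.mem_erase.1 hn).1.symm (x n)
    have hcol : ∑ t : X m, ∑ j ∈ Finset.univ.erase m, g2 j m (x j) t = 0 := by
      rw [Finset.sum_comm]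
      refine Finset.sum_eq_zero fun j hj => ?_
      have : ∀ t : X m, g2 j m (x j) t = g2 m j t (x j) := fun t => gsymm j m (x j) t
      simp only [this]
      exact gz2 m j (fun h => (Finset.mem_erase.1 hj).1 h.symm) (x j)
    -- compute the big sum
    have hbig : (Fintype.card (X m) : ℝ)
        * (a + (∑ j ∈ Finset.univ.erase m, g1 j (x j))
          + (1 / 2) * ∑ j ∈ Finset.univ.erase m, ∑ n ∈ Finset.univ.erase m, g2 j n (x j) (x n))
        = 0 := by
      calc (Fintype.card (X m) : ℝ)
            * (a + (∑ j ∈ Finset.univ.erase m, g1 j (x j))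
              + (1 / 2) * ∑ j ∈ Finset.univ.erase m, ∑ n ∈ Finset.univ.erase m, g2 j n (x j) (x n))
          = ∑ t : X m, (a + ∑ j, g1 j (Function.update x m t j)
            + (1 / 2) * ∑ j, ∑ n, g2 j n (Function.update x m t j) (Function.update x m t n)) := by
            simp only [hsplit1, hsplit2]
            rw [Finset.sum_add_distrib, Finset.sum_add_distrib, ← Finset.mul_sum,
              Finset.sum_add_distrib, Finset.sum_add_distrib, Finset.sum_add_distrib,
              gz1 m, hrow, hcol]
            simp [Finset.sum_const, nsmul_eq_mul, Finset.mul_sum]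
            simp only [← Finset.mul_sum]
            ring
        _ = 0 := hsum0
    have hDm : a + (∑ j ∈ Finset.univ.erase m, g1 j (x j))
        + (1 / 2) * ∑ j ∈ Finset.univ.erase m, ∑ n ∈ Finset.univ.erase m, g2 j n (x j) (x n) = 0 := by
      have := cardpos m
      rcases mul_eq_zero.1 hbig with h | h
      · linarith
      · exact h
    -- now subtract from hD x
    have hx := hD x
    have e1 : ∑ j, g1 j (x j) = g1 m (x m) + ∑ j ∈ Finset.univ.erase m, g1 j (x j) := by
      rw [← Finset.add_sum_erase _ _ (Finset.mem_univ m)]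
    have e2 : ∑ j, ∑ n, g2 j n (x j) (x n)
        = (∑ n ∈ Finset.univ.erase m, g2 m n (x m) (x n))
          + ((∑ j ∈ Finset.univ.erase m, g2 j m (x j) (x m))
            + ∑ j ∈ Finset.univ.erase m, ∑ n ∈ Finset.univ.erase m, g2 j n (x j) (x n)) := by
      rw [← Finset.add_sum_erase _ _ (Finset.mem_univ m)]
      congr 1
      · rw [← Finset.add_sum_erase _ _ (Finset.mem_univ m), gdiag, zero_add]
      · rw [← Finset.sum_add_distrib]
        refine Finset.sum_congr rfl fun j hj => ?_
        rw [← Finset.add_sum_erase _ _ (Finset.mem_univ m)]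
    have e3 : ∑ j ∈ Finset.univ.erase m, g2 j m (x j) (x m)
        = ∑ n ∈ Finset.univ.erase m, g2 m n (x m) (x n) := by
      refine Finset.sum_congr rfl fun j hj => gsymm j m (x j) (x m)
    have e4 : ∑ n, g2 m n (x m) (x n)
        = ∑ n ∈ Finset.univ.erase m, g2 m n (x m) (x n) := by
      rw [← Finset.add_sum_erase _ _ (Finset.mem_univ m), gdiag, zero_add]
    rw [e1, e2, e3] at hx
    rw [e4]
    linear_combination hx - hDm
  -- key lemma B : off-diagonal g2 vanishes along any x
  have keyB : ∀ (x : ∀ i, X i) (m n : Fin d), g2 m n (x m) (x n) = 0 := by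
    intro x m n
    by_cases hmn : m = n
    · subst hmn; exact gdiag m _ _
    have hA := keyA x m
    -- average keyA over coordinate n
    have hsplit : ∀ t : X n,
        g1 m (Function.update x n t m)
          + ∑ k, g2 m k (Function.update x n t m) (Function.update x n t k)
        = g1 m (x m) + (g2 m n (x m) t + ∑ k ∈ Finset.univ.erase n, g2 m k (x m) (x k)) := by
      intro t
      rw [Function.update_of_ne hmn]
      congr 1
      rw [← Finset.add_sum_erase _ _ (Finset.mem_univ n), Function.update_self]
      congr 1
      exact Finset.sum_congr rfl fun k hk => by
        rw [Function.update_of_ne (Finset.mem_erase.1 hk).1]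
    have hsum0 : ∑ t : X n, (g1 m (x m) + (g2 m n (x m) t
        + ∑ k ∈ Finset.univ.erase n, g2 m k (x m) (x k))) = 0 := by
      calc ∑ t : X n, (g1 m (x m) + (g2 m n (x m) t
            + ∑ k ∈ Finset.univ.erase n, g2 m k (x m) (x k)))
          = ∑ t : X n, (g1 m (Function.update x n t m)
            + ∑ k, g2 m k (Function.update x n t m) (Function.update x n t k)) := by
            exact Finset.sum_congr rfl fun t _ => (hsplit t).symm
        _ = 0 := by
            refine Finset.sum_eq_zero fun t _ => keyA (Function.update x n t) m
    have hmid : ∑ t : X n, g2 m n (x m) t = 0 := by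
      have : ∀ t : X n, g2 m n (x m) t = g2 n m t (x m) := fun t => gsymm m n (x m) t
      simp only [this]
      exact gz2 n m (fun h => hmn h.symm) (x m)
    rw [Finset.sum_add_distrib, Finset.sum_add_distrib, hmid, Finset.sum_const,
      Finset.sum_const, Finset.card_univ, nsmul_eq_mul, nsmul_eq_mul, zero_add] at hsum0
    have hred : g1 m (x m) + ∑ k ∈ Finset.univ.erase n, g2 m k (x m) (x k) = 0 := by
      have := cardpos n
      nlinarith [hsum0]
    have e4 : ∑ k, g2 m k (x m) (x k)
        = g2 m n (x m) (x n) + ∑ k ∈ Finset.univ.erase n, g2 m k (x m) (x k) := by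
      rw [← Finset.add_sum_erase _ _ (Finset.mem_univ n)]
    rw [e4] at hA
    linarith
  -- realize arbitrary pairs
  have x0 : ∀ i, X i := fun i => Classical.arbitrary (X i)
  have g2zero : ∀ (m n : Fin d) (xm : X m) (xn : X n), g2 m n xm xn = 0 := by
    intro m n xm xn
    by_cases hmn : m = n
    · subst hmn; exact gdiag m xm xn
    · have := keyB (Function.update (Function.update x0 m xm) n xn) m n
      rwa [Function.update_of_ne hmn, Function.update_self, Function.update_self] at this
  have g1zero : ∀ (m : Fin d) (xm : X m), g1 m xm = 0 := by
    intro m xm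
    have := keyA (Function.update x0 m xm) m
    rw [Function.update_self] at this
    have hz : ∑ n, g2 m n xm (Function.update x0 m xm n) = 0 :=
      Finset.sum_eq_zero fun n _ => g2zero m n _ _
    linarith [this, hz]
  have azero : a = 0 := by
    have := hD x0
    have hz1 : ∑ m, g1 m (x0 m) = 0 := Finset.sum_eq_zero fun m _ => g1zero m _
    have hz2 : ∑ m, ∑ n, g2 m n (x0 m) (x0 n) = 0 :=
      Finset.sum_eq_zero fun m _ => Finset.sum_eq_zero fun n _ => g2zero m n _ _
    rw [hz1, hz2] at this
    linarith
  refine ⟨by have := azero; simp [ha] at this; linarith, ?_, ?_⟩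
  · intro m xm; have := g1zero m xm; simp [hg1] at this; linarith
  · intro m n xm xn; have := g2zero m n xm xn; simp [hg2] at this; linarith
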